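/- The function κ(t) = (t·ln t + 1 − t)/((t−1) − ln t), defined for t ∈ (0,1)∪(1,∞), is monotonically increasing, and lim_{t→1} κ(t) = 1. -/

import Mathlib

open Set Real

private lemma hasDerivAt_E (x : ℝ) (hx0 : x ≠ 0) :
    HasDerivAt (fun t : ℝ => t - 1/t - 2 * Real.log t) (1 - (-(x^2)⁻¹) - 2 * x⁻¹) x := by
  have h1 : HasDerivAt (fun t : ℝ => 1/t) (-(x^2)⁻¹) x := by
    simpa [one_div] using (hasDerivAt_inv hx0)
  exact ((hasDerivAt_id x).sub h1).sub ((Real.hasDerivAt_log hx0).const_mul 2)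

private lemma E1 : ∀ t : ℝ, 1 ≤ t → 2 * Real.log t ≤ t - 1/t := by
  have key : MonotoneOn (fun t : ℝ => t - 1/t - 2 * Real.log t) (Ici 1) := by
    apply monotoneOn_of_deriv_nonneg (convex_Ici 1)
    · apply ContinuousOn.sub
      · exact (continuous_id.continuousOn).sub <|
          continuousOn_const.div continuousOn_id
            (fun x hx => ne_of_gt (lt_of_lt_of_le one_pos hx))
      · exact continuousOn_const.mul <| Real.continuousOn_log.mono (by
          intro x hx; simp at hx ⊢; linarith)
    · rw [interior_Ici]
      intro x hx
      have hx0 : x ≠ 0 := by simp at hx; positivity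
      exact (hasDerivAt_E x hx0).differentiableAt.differentiableWithinAt
    · rw [interior_Ici]
      intro x hx
      simp only [mem_Ioi] at hx
      have hx0 : (0:ℝ) < x := by linarith
      rw [(hasDerivAt_E x hx0.ne').deriv]
      have : 1 - (-(x^2)⁻¹) - 2 * x⁻¹ = (1 - x⁻¹)^2 := by
        field_simp; ring
      rw [this]; positivity
  intro t ht
  have := key (self_mem_Ici) ht ht
  simp only [Real.log_one] at this
  linarith

private lemma E2 : ∀ t : ℝ, 0 < t → t ≤ 1 → t - 1/t ≤ 2 * Real.log t := by
  intro t ht ht1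
  have h := E1 (1/t) (by rw [le_div_iff₀ ht]; linarith)
  rw [Real.log_div one_ne_zero ht.ne', Real.log_one] at h
  have : 1/(1/t) = t := by field_simp
  rw [this] at h
  linarith

private lemma log_lb {t : ℝ} (ht : 0 < t) : 1 - 1/t ≤ Real.log t := by
  have h := Real.log_le_sub_one_of_pos (show (0:ℝ) < 1/t by positivity)
  rw [Real.log_div one_ne_zero ht.ne', Real.log_one] at h
  linarith

private lemma hasDerivAt_D (x : ℝ) (hx0 : x ≠ 0) :
    HasDerivAt (fun t : ℝ => (t+1) * Real.log t - 2*(t-1))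
      (1 * Real.log x + (x+1) * x⁻¹ - 2 * 1) x := by
  exact (((hasDerivAt_id x).add_const 1).mul (Real.hasDerivAt_log hx0)).sub
    (((hasDerivAt_id x).sub_const 1).const_mul 2)

private lemma D1 : ∀ t : ℝ, 1 ≤ t → 2*(t-1) ≤ (t+1) * Real.log t := by
  have key : MonotoneOn (fun t : ℝ => (t+1) * Real.log t - 2*(t-1)) (Ici 1) := by
    apply monotoneOn_of_deriv_nonneg (convex_Ici 1)
    · apply ContinuousOn.sub
      · exact (continuous_id.continuousOn.add continuousOn_const).mul <|
          Real.continuousOn_log.mono (by intro x hx; simp at hx ⊢; linarith)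
      · exact (continuous_const.mul (continuous_id.sub continuous_const)).continuousOn
    · rw [interior_Ici]
      intro x hx
      have hx0 : x ≠ 0 := by simp at hx; positivity
      exact (hasDerivAt_D x hx0).differentiableAt.differentiableWithinAt
    · rw [interior_Ici]
      intro x hx
      simp only [mem_Ioi] at hx
      have hx0 : (0:ℝ) < x := by linarith
      rw [(hasDerivAt_D x hx0.ne').deriv]
      have hl := log_lb hx0
      have : (x+1) * x⁻¹ = 1 + 1/x := by field_simp
      rw [one_mul, this]
      linarith
  intro t ht
  have := key (self_mem_Ici) ht ht
  simp only [Real.log_one] at this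
  linarith

private lemma D2 : ∀ t : ℝ, 0 < t → t ≤ 1 → (t+1) * Real.log t ≤ 2*(t-1) := by
  intro t ht ht1
  have h := D1 (1/t) (by rw [le_div_iff₀ ht]; linarith)
  rw [Real.log_div one_ne_zero ht.ne', Real.log_one] at h
  have hti : t * (1/t) = 1 := by field_simp
  nlinarith [h, hti, mul_le_mul_of_nonneg_left h (le_of_lt ht)]

-- lemma C : t * (log t)^2 ≤ (t-1)^2 for t > 0
private lemma C1 : ∀ t : ℝ, 1 ≤ t → t * (Real.log t)^2 ≤ (t-1)^2 := by
  intro t ht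
  set s := Real.sqrt t with hs
  have ht0 : (0:ℝ) ≤ t := by linarith
  have hs1 : 1 ≤ s := by
    rw [hs, show (1:ℝ) = Real.sqrt 1 by simp]; exact Real.sqrt_le_sqrt ht
  have hs2 : s^2 = t := Real.sq_sqrt ht0
  have hlog : Real.log t = 2 * Real.log s := by
    rw [hs, Real.log_sqrt ht0]; ring
  have hE := E1 s (hs1)
  have hlogs : 0 ≤ Real.log s := Real.log_nonneg hs1
  have hs0 : (0:ℝ) < s := by linarith
  have hsq : (2 * Real.log s)^2 ≤ (s - 1/s)^2 := by
    apply sq_le_sq' <;> nlinarith [one_div_pos.mpr hs0]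
  calc t * (Real.log t)^2 = s^2 * (2 * Real.log s)^2 := by rw [hlog, hs2]
    _ ≤ s^2 * (s - 1/s)^2 := by nlinarith
    _ = (s^2 - 1)^2 := by field_simp
    _ = (t-1)^2 := by rw [hs2]

private lemma C : ∀ t : ℝ, 0 < t → t * (Real.log t)^2 ≤ (t-1)^2 := by
  intro t ht
  rcases le_or_gt 1 t with h | h
  · exact C1 t h
  · have h1 := C1 (1/t) (by rw [le_div_iff₀ ht]; linarith)
    rw [Real.log_div one_ne_zero ht.ne', Real.log_one] at h1
    rw [zero_sub, neg_sq] at h1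
    have ht2 : (0:ℝ) < t^2 := by positivity
    have h2 := mul_le_mul_of_nonneg_left h1 (le_of_lt ht2)
    have k1 : t^2 * ((1/t) * (Real.log t)^2) = t * (Real.log t)^2 := by
      field_simp
    have k2 : t^2 * (1/t - 1)^2 = (t-1)^2 := by
      field_simp; ring
    linarith

private lemma denom_pos {t : ℝ} (ht : 0 < t) (ht1 : t ≠ 1) :
    0 < (t - 1) - Real.log t := by
  have := Real.log_lt_sub_one_of_pos ht ht1
  linarith

noncomputable def kfun : ℝ → ℝ := fun t => (t * Real.log t + 1 - t) / ((t - 1) - Real.log t)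

private lemma hasDerivAt_num (x : ℝ) (hx0 : x ≠ 0) :
    HasDerivAt (fun t : ℝ => t * Real.log t + 1 - t) (Real.log x) x := by
  have h1 : HasDerivAt (fun t : ℝ => t * Real.log t) (1 * Real.log x + x * x⁻¹) x :=
    (hasDerivAt_id x).mul (Real.hasDerivAt_log hx0)
  have h2 := (h1.add_const 1).sub (hasDerivAt_id x)
  rw [show Real.log x = 1 * Real.log x + x * x⁻¹ - 1 by rw [mul_inv_cancel₀ hx0]; ring]
  exact h2

private lemma hasDerivAt_den (x : ℝ) (hx0 : x ≠ 0) :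
    HasDerivAt (fun t : ℝ => (t - 1) - Real.log t) (1 - x⁻¹) x :=
  ((hasDerivAt_id x).sub_const 1).sub (Real.hasDerivAt_log hx0)

private lemma hasDerivAt_kfun {x : ℝ} (hx : 0 < x) (hx1 : x ≠ 1) :
    HasDerivAt kfun
      ((Real.log x * ((x - 1) - Real.log x)
        - (x * Real.log x + 1 - x) * (1 - x⁻¹)) / ((x - 1) - Real.log x)^2) x :=
  (hasDerivAt_num x hx.ne').div (hasDerivAt_den x hx.ne') (denom_pos hx hx1).ne'

private lemma deriv_kfun_nonneg {x : ℝ} (hx : 0 < x) (hx1 : x ≠ 1) :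
    0 ≤ deriv kfun x := by
  rw [(hasDerivAt_kfun hx hx1).deriv]
  apply div_nonneg _ (sq_nonneg _)
  have key : Real.log x * ((x - 1) - Real.log x) - (x * Real.log x + 1 - x) * (1 - x⁻¹)
      = ((x-1)^2 - x * (Real.log x)^2) / x := by
    field_simp; ring
  rw [key]
  exact div_nonneg (by linarith [C x hx]) hx.le

private lemma cont_kfun {s : Set ℝ} (hs : ∀ x ∈ s, 0 < x ∧ x ≠ 1) :
    ContinuousOn kfun s := by
  apply ContinuousOn.div
  · exact ((continuous_id.continuousOn.mul
      (Real.continuousOn_log.mono (fun x hx => (hs x hx).1.ne'))).add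
      continuousOn_const).sub continuous_id.continuousOn
  · exact (continuous_id.continuousOn.sub continuousOn_const).sub
      (Real.continuousOn_log.mono (fun x hx => (hs x hx).1.ne'))
  · exact fun x hx => (denom_pos (hs x hx).1 (hs x hx).2).ne'

private lemma mono1 : MonotoneOn kfun (Ioo (0:ℝ) 1) := by
  apply monotoneOn_of_deriv_nonneg (convex_Ioo 0 1)
  · exact cont_kfun (fun x hx => ⟨hx.1, ne_of_lt hx.2⟩)
  · rw [interior_Ioo]
    exact fun x hx =>
      (hasDerivAt_kfun hx.1 (ne_of_lt hx.2)).differentiableAt.differentiableWithinAt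
  · rw [interior_Ioo]
    exact fun x hx => deriv_kfun_nonneg hx.1 (ne_of_lt hx.2)

private lemma mono2 : MonotoneOn kfun (Ioi (1:ℝ)) := by
  apply monotoneOn_of_deriv_nonneg (convex_Ioi 1)
  · exact cont_kfun (fun x hx => ⟨lt_trans one_pos hx, ne_of_gt hx⟩)
  · rw [interior_Ioi]
    exact fun x hx =>
      (hasDerivAt_kfun (lt_trans one_pos hx) (ne_of_gt hx)).differentiableAt.differentiableWithinAt
  · rw [interior_Ioi]
    exact fun x hx => deriv_kfun_nonneg (lt_trans one_pos hx) (ne_of_gt hx)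

private lemma ub1 {t : ℝ} (ht : 0 < t) (ht1 : t < 1) : kfun t ≤ 1 := by
  rw [kfun, div_le_one (denom_pos ht (ne_of_lt ht1))]
  have := D2 t ht ht1.le
  linarith

private lemma lb2 {t : ℝ} (ht1 : 1 < t) : 1 ≤ kfun t := by
  have ht : (0:ℝ) < t := lt_trans one_pos ht1
  rw [kfun, le_div_iff₀ (denom_pos ht (ne_of_gt ht1)), one_mul]
  have := D1 t ht1.le
  linarith

private lemma lb1 {t : ℝ} (ht : 0 < t) (ht1 : t < 1) : t ≤ kfun t := by
  rw [kfun, le_div_iff₀ (denom_pos ht (ne_of_lt ht1))]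
  have h := E2 t ht ht1.le
  have hti : t * (1/t) = 1 := by field_simp
  nlinarith [mul_le_mul_of_nonneg_left h ht.le]

private lemma ub2 {t : ℝ} (ht1 : 1 < t) : kfun t ≤ t := by
  have ht : (0:ℝ) < t := lt_trans one_pos ht1
  rw [kfun, div_le_iff₀ (denom_pos ht (ne_of_gt ht1))]
  have h := E1 t ht1.le
  have hti : t * (1/t) = 1 := by field_simp
  nlinarith [mul_le_mul_of_nonneg_left h ht.le]

theorem kappa_monotone_and_tendsto (κ : ℝ → ℝ)
    (hκ : ∀ t, κ t = (t * Real.log t + 1 - t) / ((t - 1) - Real.log t)) :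
    MonotoneOn κ (Ioo (0:ℝ) 1 ∪ Ioi 1)
      ∧ Filter.Tendsto κ (nhdsWithin 1 (Ioi (0:ℝ) \ {1})) (nhds 1) := by
  have hfun : κ = kfun := funext hκ
  subst hfun
  constructor
  · intro a ha b hb hab
    rcases ha with ha | ha <;> rcases hb with hb | hb
    · exact mono1 ha hb hab
    · exact le_trans (ub1 ha.1 ha.2) (lb2 hb)
    · exact absurd (lt_of_le_of_lt hab hb.2) (not_lt.mpr (mem_Ioi.mp ha).le)
    · exact mono2 ha hb hab
  · have hg : Filter.Tendsto (fun t : ℝ => min t 1) (nhdsWithin 1 (Ioi (0:ℝ) \ {1})) (nhds 1) := by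
      have hc : Continuous (fun t : ℝ => min t 1) := continuous_id.min continuous_const
      have := (hc.tendsto (1:ℝ)).mono_left (nhdsWithin_le_nhds (s := Ioi (0:ℝ) \ {1}))
      simpa using this
    have hh : Filter.Tendsto (fun t : ℝ => max t 1) (nhdsWithin 1 (Ioi (0:ℝ) \ {1})) (nhds 1) := by
      have hc : Continuous (fun t : ℝ => max t 1) := continuous_id.max continuous_const
      have := (hc.tendsto (1:ℝ)).mono_left (nhdsWithin_le_nhds (s := Ioi (0:ℝ) \ {1}))
      simpa using this
    apply tendsto_of_tendsto_of_tendsto_of_le_of_le' hg hh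
    · filter_upwards [self_mem_nhdsWithin] with t ht
      obtain ⟨ht0, ht1⟩ := ht
      simp only [mem_Ioi] at ht0
      rcases lt_or_gt_of_ne (show t ≠ 1 from ht1) with h | h
      · rw [min_eq_left h.le]; exact lb1 ht0 h
      · rw [min_eq_right h.le]; exact lb2 h
    · filter_upwards [self_mem_nhdsWithin] with t ht
      obtain ⟨ht0, ht1⟩ := ht
      simp only [mem_Ioi] at ht0
      rcases lt_or_gt_of_ne (show t ≠ 1 from ht1) with h | h
      · rw [max_eq_right h.le]; exact ub1 ht0 h
      · rw [max_eq_left h.le]; exact ub2 h
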